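/- For positive semidefinite density matrices ρ, σ, the fidelity satisfies F(ρ,σ) = Tr((ρ^{-1} # σ) ρ), where F(ρ,σ) = Tr √(ρ^{1/2} σ ρ^{1/2}) and ρ^{-1} is the Moore–Penrose pseudoinverse. -/

import Mathlib

open Matrix Kronecker
open scoped ComplexOrder

noncomputable section
attribute [local instance] Classical.propDecidable

/-- Moore–Penrose pseudoinverse of a square complex matrix. -/
def pinv {n : Type*} [Fintype n] [DecidableEq n] (A : Matrix n n ℂ) : Matrix n n ℂ :=
  if h : ∃ B : Matrix n n ℂ,
      A * B * A = A ∧ B * A * B = B ∧ (A * B)ᴴ = A * B ∧ (B * A)ᴴ = B * A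
  then h.choose else 0

/-- Positive semidefinite square root (junk value `0` if the matrix is not PSD). -/
def msqrt {n : Type*} [Fintype n] [DecidableEq n] (A : Matrix n n ℂ) : Matrix n n ℂ :=
  if h : A.PosSemidef then
    h.1.eigenvectorUnitary.1 * diagonal ((↑) ∘ (√·) ∘ h.1.eigenvalues) *
      (star h.1.eigenvectorUnitary : Matrix n n ℂ)
  else 0

/-- `sgn(X) = U sgn(Σ) V*` for an SVD `X = U Σ V*`; equivalently `X (X* X)^{-1/2}`
with the Moore–Penrose pseudoinverse. -/
def msgn {n : Type*} [Fintype n] [DecidableEq n] (X : Matrix n n ℂ) : Matrix n n ℂ :=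
  X * pinv (msqrt (Xᴴ * X))

/-- Matrix geometric mean `A # B = A^{1/2} (A^{-1/2} B A^{-1/2})^{1/2} A^{1/2}`
(with Moore–Penrose pseudoinverses). -/
def geo {n : Type*} [Fintype n] [DecidableEq n] (A B : Matrix n n ℂ) : Matrix n n ℂ :=
  msqrt A * msqrt (pinv (msqrt A) * B * pinv (msqrt A)) * msqrt A

/-- The unnormalized maximally entangled state `|Ω⟩ = ∑ i, |i⟩ ⊗ |i⟩`. -/
def omegaVec (d : ℕ) : Fin d × Fin d → ℂ := fun p => if p.1 = p.2 then 1 else 0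

/-- Reduced density matrix of `|C⟩⟨C|` on the first subsystem
(partial trace over the second subsystem). -/
def reducedA {d : ℕ} (C : Fin d × Fin d → ℂ) : Matrix (Fin d) (Fin d) ℂ :=
  Matrix.of fun i j => ∑ k, C (i, k) * star (C (j, k))

/-- Partial trace over the first subsystem of the operator `|D⟩⟨C|`. -/
def trA {d : ℕ} (D C : Fin d × Fin d → ℂ) : Matrix (Fin d) (Fin d) ℂ :=
  Matrix.of fun j l => ∑ i, D (i, j) * star (C (i, l))

/-- `ℓ²→ℓ²` operator norm (largest singular value). -/
def opNorm {n : Type*} [Fintype n] [DecidableEq n] (A : Matrix n n ℂ) : ℝ :=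
  ‖(Matrix.toEuclideanCLM (𝕜 := ℂ) A : EuclideanSpace ℂ n →L[ℂ] EuclideanSpace ℂ n)‖

/-- `P` is the orthogonal projection onto the image (column space) of `A`. -/
def IsOrthProjOnto {n : Type*} [Fintype n] [DecidableEq n] (P A : Matrix n n ℂ) : Prop :=
  Pᴴ = P ∧ P * P = P ∧ LinearMap.range P.mulVecLin = LinearMap.range A.mulVecLin

/-- `η` is the smallest nonzero eigenvalue of the Hermitian matrix `M`. -/
def IsSmallestNonzeroEigenvalue {n : Type*} [Fintype n] [DecidableEq n]
    (M : Matrix n n ℂ) (η : ℝ) : Prop :=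
  ∃ hM : M.IsHermitian, η ≠ 0 ∧ (∃ i, hM.eigenvalues i = η) ∧
    ∀ i, hM.eigenvalues i ≠ 0 → η ≤ hM.eigenvalues i

/-! ### Auxiliary lemmas on the Moore–Penrose pseudoinverse -/

open scoped MatrixOrder

section Aux
variable {n : Type*} [Fintype n] [DecidableEq n]

/-- The four Penrose conditions. -/
def IsMP (A B : Matrix n n ℂ) : Prop :=
  A * B * A = A ∧ B * A * B = B ∧ (A * B)ᴴ = A * B ∧ (B * A)ᴴ = B * A

omit [DecidableEq n] in
lemma IsMP.symm {A B : Matrix n n ℂ} (h : IsMP A B) : IsMP B A :=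
  ⟨h.2.1, h.1, h.2.2.2, h.2.2.1⟩

omit [DecidableEq n] in
lemma IsMP.conjT {A B : Matrix n n ℂ} (h : IsMP A B) : IsMP Aᴴ Bᴴ := by
  obtain ⟨h1, h2, h3, h4⟩ := h
  refine ⟨?_, ?_, ?_, ?_⟩
  · calc Aᴴ * Bᴴ * Aᴴ = (A * B * A)ᴴ := by simp [conjTranspose_mul, mul_assoc]
    _ = Aᴴ := by rw [h1]
  · calc Bᴴ * Aᴴ * Bᴴ = (B * A * B)ᴴ := by simp [conjTranspose_mul, mul_assoc]
    _ = Bᴴ := by rw [h2]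
  · calc (Aᴴ * Bᴴ)ᴴ = B * A := by simp [conjTranspose_mul]
    _ = (B * A)ᴴ := h4.symm
    _ = Aᴴ * Bᴴ := by simp [conjTranspose_mul]
  · calc (Bᴴ * Aᴴ)ᴴ = A * B := by simp [conjTranspose_mul]
    _ = (A * B)ᴴ := h3.symm
    _ = Bᴴ * Aᴴ := by simp [conjTranspose_mul]

omit [DecidableEq n] in
lemma IsMP.unique {A B C : Matrix n n ℂ} (hB : IsMP A B) (hC : IsMP A C) : B = C := by
  obtain ⟨b1, b2, b3, b4⟩ := hB
  obtain ⟨c1, c2, c3, c4⟩ := hC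
  have hBC : B = B * (A * C) := by
    calc B = B * (A * B) := by rw [← mul_assoc, b2]
    _ = B * (A * B)ᴴ := by rw [b3]
    _ = B * (Bᴴ * Aᴴ) := by rw [conjTranspose_mul]
    _ = B * (Bᴴ * (A * C * A)ᴴ) := by rw [c1]
    _ = B * (Bᴴ * (Aᴴ * (A * C)ᴴ)) := by simp [conjTranspose_mul, mul_assoc]
    _ = B * ((A * B)ᴴ * (A * C)ᴴ) := by simp [conjTranspose_mul, mul_assoc]
    _ = B * ((A * B) * (A * C)) := by rw [b3, c3]
    _ = (B * A * B) * (A * C) := by simp [mul_assoc]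
    _ = B * (A * C) := by rw [b2]
  have hCB : C = B * (A * C) := by
    calc C = (C * A) * C := by rw [c2]
    _ = (C * A)ᴴ * C := by rw [c4]
    _ = Aᴴ * Cᴴ * C := by rw [conjTranspose_mul]
    _ = (A * B * A)ᴴ * Cᴴ * C := by rw [b1]
    _ = ((B * A)ᴴ * Aᴴ) * Cᴴ * C := by simp [conjTranspose_mul, mul_assoc]
    _ = (B * A) * ((C * A)ᴴ * C) := by rw [b4]; simp [conjTranspose_mul, mul_assoc]
    _ = (B * A) * ((C * A) * C) := by rw [c4]
    _ = B * (A * C) := by rw [c2]; simp [mul_assoc]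
  rw [hBC, ← hCB]

lemma pinv_eq_of_isMP {A B : Matrix n n ℂ} (hB : IsMP A B) : pinv A = B := by
  have hex : ∃ C : Matrix n n ℂ,
      A * C * A = A ∧ C * A * C = C ∧ (A * C)ᴴ = A * C ∧ (C * A)ᴴ = C * A := ⟨B, hB⟩
  rw [pinv, dif_pos hex]
  exact IsMP.unique hex.choose_spec hB

lemma herm_exists {A : Matrix n n ℂ} (hA : A.IsHermitian) :
    ∃ B : Matrix n n ℂ, IsMP A B ∧ (A.PosSemidef → B.PosSemidef) := by
  set U : Matrix n n ℂ := (hA.eigenvectorUnitary : Matrix n n ℂ) with hUdef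
  have hU2 : star U * U = 1 := mem_unitaryGroup_iff'.mp hA.eigenvectorUnitary.2
  set d : n → ℂ := fun i => (hA.eigenvalues i : ℂ) with hd
  have hspec : A = U * diagonal d * star U := hA.spectral_theorem
  have key : ∀ f g : n → ℂ,
      (U * diagonal f * star U) * (U * diagonal g * star U)
        = U * diagonal (fun i => f i * g i) * star U := by
    intro f g
    calc (U * diagonal f * star U) * (U * diagonal g * star U)
        = U * diagonal f * (star U * U) * diagonal g * star U := by
          simp only [mul_assoc]
      _ = U * (diagonal f * diagonal g) * star U := by
          rw [hU2]; simp only [mul_assoc, mul_one, one_mul]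
      _ = U * diagonal (fun i => f i * g i) * star U := by
          rw [diagonal_mul_diagonal]
  have keyH : ∀ f : n → ℂ,
      (U * diagonal f * star U)ᴴ = U * diagonal (fun i => star (f i)) * star U := by
    intro f
    simp only [conjTranspose_mul, conjTranspose_conjTranspose, star_eq_conjTranspose,
      diagonal_conjTranspose, mul_assoc]
    rfl
  have hcong : ∀ f g : n → ℂ, (∀ i, f i = g i) →
      U * diagonal f * star U = U * diagonal g * star U := by
    intro f g h
    rw [funext h]
  refine ⟨U * diagonal (fun i => (d i)⁻¹) * star U, ⟨?_, ?_, ?_, ?_⟩, ?_⟩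
  · rw [hspec, key, key]
    exact hcong _ _ fun i => by by_cases h : d i = 0 <;> field_simp [h]
  · rw [hspec, key, key]
    exact hcong _ _ fun i => by by_cases h : d i = 0 <;> field_simp [h]
  · rw [hspec, key, keyH]
    refine hcong _ _ fun i => ?_
    simp only [hd, Complex.star_def, ← Complex.ofReal_inv, ← Complex.ofReal_mul,
      Complex.conj_ofReal]
  · rw [hspec, key, keyH]
    refine hcong _ _ fun i => ?_
    simp only [hd, Complex.star_def, ← Complex.ofReal_inv, ← Complex.ofReal_mul,
      Complex.conj_ofReal]
  · intro hP
    have hnn : ∀ i, 0 ≤ (hA.eigenvalues i)⁻¹ := fun i => inv_nonneg.mpr (hP.eigenvalues_nonneg i)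
    set s : n → ℂ := fun i => (Real.sqrt (hA.eigenvalues i)⁻¹ : ℂ) with hsdef
    have hs : (star s) = s := by
      funext i; simp [hsdef, Complex.conj_ofReal]
    set M : Matrix n n ℂ := diagonal s * star U with hM
    have hMM : Mᴴ * M = U * diagonal (fun i => (d i)⁻¹) * star U := by
      rw [hM, conjTranspose_mul, ← star_eq_conjTranspose (star U), star_star,
        diagonal_conjTranspose, hs]
      rw [show U * diagonal s * (diagonal s * star U) = U * (diagonal s * diagonal s) * star U
        from by simp only [mul_assoc], diagonal_mul_diagonal]
      exact hcong _ _ fun i => by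
        simp only [hsdef, hd]
        rw [← Complex.ofReal_mul, Real.mul_self_sqrt (hnn i), Complex.ofReal_inv]
    rw [← hMM]
    exact posSemidef_conjTranspose_mul_self M

lemma msqrt_eq {A : Matrix n n ℂ} (h : A.PosSemidef) : msqrt A = CFC.sqrt A := by
  rw [msqrt, dif_pos h, CFC.sqrt_eq_cfc, cfc_nnreal_eq_real _ A, h.1.cfc_eq, IsHermitian.cfc,
    Unitary.conjStarAlgAut_apply]
  congr 2
  ext i j
  simp [diagonal_apply, h.eigenvalues_nonneg i]

end Aux

theorem fidelity_eq_trace_geo_mean {n : Type*} [Fintype n] [DecidableEq n]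
    (ρ σ : Matrix n n ℂ) (hρ : ρ.PosSemidef) (hσ : σ.PosSemidef) :
    (msqrt (msqrt ρ * σ * msqrt ρ)).trace = (geo (pinv ρ) σ * ρ).trace := by
  set S : Matrix n n ℂ := msqrt ρ with hSdef
  have hSps : S.PosSemidef := by rw [hSdef, msqrt_eq hρ]; exact (CFC.sqrt_nonneg ρ).posSemidef
  have hSS : S * S = ρ := by rw [hSdef, msqrt_eq hρ]; exact CFC.sqrt_mul_sqrt_self ρ hρ.nonneg
  obtain ⟨Q, hQ, hQps'⟩ := herm_exists hSps.1
  have hQps : Q.PosSemidef := hQps' hSps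
  -- Q is Hermitian and commutes with S
  have hQH : Qᴴ = Q := by
    have h := hQ.conjT
    rw [hSps.1] at h
    exact IsMP.unique h hQ
  have hcomm : Q * S = S * Q := by
    rw [← hQ.2.2.1, conjTranspose_mul, hQH, hSps.1]
  -- right-associated rewriting rules
  have r1 : Q * (S * Q) = Q := by rw [← mul_assoc, hQ.2.1]
  have r2 : S * (Q * S) = S := by rw [← mul_assoc, hQ.1]
  have g1 : ∀ X : Matrix n n ℂ, Q * (S * (Q * X)) = Q * X := fun X => by
    rw [← mul_assoc, ← mul_assoc, hQ.2.1]
  have g2 : ∀ X : Matrix n n ℂ, S * (Q * (S * X)) = S * X := fun X => by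
    rw [← mul_assoc, ← mul_assoc, hQ.1]
  have g3 : ∀ X : Matrix n n ℂ, Q * (S * X) = S * (Q * X) := fun X => by
    rw [← mul_assoc, hcomm, mul_assoc]
  -- pinv ρ = Q * Q
  have hMPρ : IsMP ρ (Q * Q) := by
    rw [← hSS]
    refine ⟨?_, ?_, ?_, ?_⟩
    · simp only [mul_assoc]
      rw [g3, g1, r2]
    · simp only [mul_assoc]
      rw [← g3, g2, r1]
    · have h : S * S * (Q * Q) = S * Q := by
        simp only [mul_assoc]
        rw [← g3, g2]
      rw [h, hQ.2.2.1]
    · have h : Q * Q * (S * S) = Q * S := by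
        simp only [mul_assoc]
        rw [g3, g1]
      rw [h, hQ.2.2.2]
  have hpinvρ : pinv ρ = Q * Q := pinv_eq_of_isMP hMPρ
  have hQQps : (Q * Q).PosSemidef := by rw [← sq]; exact hQps.pow 2
  have hmsqQQ : msqrt (Q * Q) = Q := by
    rw [msqrt_eq hQQps]
    exact CFC.sqrt_mul_self Q hQps.nonneg
  have hpinvQ : pinv Q = S := pinv_eq_of_isMP hQ.symm
  -- T = msqrt (S σ S)
  have hSσS : (S * σ * S).PosSemidef := by
    have h := hσ.mul_mul_conjTranspose_same S
    rwa [hSps.1] at h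
  set T : Matrix n n ℂ := msqrt (S * σ * S) with hTdef
  have hTps : T.PosSemidef := by rw [hTdef, msqrt_eq hSσS]; exact (CFC.sqrt_nonneg _).posSemidef
  have hTH : Tᴴ = T := hTps.1
  have hTT : T * T = S * (σ * S) := by
    rw [hTdef, msqrt_eq hSσS, CFC.sqrt_mul_sqrt_self _ hSσS.nonneg, mul_assoc]
  -- the projection P = S * Q absorbs T
  have hPleft : ∀ X : Matrix n n ℂ, (S * Q) * (S * X) = S * X := fun X => by
    rw [← mul_assoc, hQ.1]
  have hPT : (S * Q) * T = T := by
    have hN : (T - (S * Q) * T) * (T - (S * Q) * T)ᴴ = 0 := by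
      have hPH : (S * Q)ᴴ = S * Q := hQ.2.2.1
      have e1 : T * (T * (S * Q)) = T * T := by
        rw [← mul_assoc, hTT]
        calc S * (σ * S) * (S * Q) = S * (σ * (S * (S * Q))) := by simp only [mul_assoc]
        _ = S * (σ * (S * (Q * S))) := by rw [hcomm]
        _ = S * (σ * S) := by rw [r2]
      have e2 : (S * Q) * T * T = T * T := by
        rw [mul_assoc, hTT, hPleft]
      have e3 : (S * Q) * T * (T * (S * Q)) = T * T := by
        rw [mul_assoc, e1, ← mul_assoc, e2]
      rw [conjTranspose_sub, hTH, conjTranspose_mul, hTH, hPH, sub_mul, mul_sub, mul_sub]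
      rw [e1, e3, e2]
      abel
    have h0 : T - (S * Q) * T = 0 := self_mul_conjTranspose_eq_zero.mp hN
    have := sub_eq_zero.mp h0
    exact this.symm
  -- unfold geo and compute the trace
  rw [geo, hpinvρ, hmsqQQ, hpinvQ, ← hSS, ← hTdef]
  have hassoc : Q * T * Q * (S * S) = (Q * T) * (Q * (S * S)) := by
    simp only [mul_assoc]
  rw [hassoc, trace_mul_comm (Q * T) (Q * (S * S))]
  rw [show Q * (S * S) * (Q * T) = T from ?_]
  calc Q * (S * S) * (Q * T) = Q * (S * (S * (Q * T))) := by simp only [mul_assoc]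
  _ = Q * (S * T) := by rw [show S * (Q * T) = T from by rw [← mul_assoc]; exact hPT]
  _ = (Q * S) * T := by rw [← mul_assoc]
  _ = (S * Q) * T := by rw [hcomm]
  _ = T := hPT
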